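/- For nonnegative integers a₁,…,a_n, the sum ∑ over tuples (i₁,…,i_n) of nonnegative integers with i₁+⋯+i_n ≤ s of the product i₁^{a₁}⋯i_n^{a_n} is a polynomial in s of degree a₁+⋯+a_n+n, with leading coefficient (a₁!⋯a_n!)/((n + a₁+⋯+a_n)!). -/
import Mathlib

open Finset Polynomial

set_option linter.unusedVariables false
set_option linter.unnecessarySeqFocus false


/-- Hockey stick: sum of `j.choose p` over `j ≤ m`. -/
lemma sum_choose_range (p m : ℕ) :
    ∑ j ∈ range (m + 1), j.choose p = (m + 1).choose (p + 1) := by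
  rw [← Nat.sum_Icc_choose m p]
  refine (Finset.sum_subset ?_ ?_).symm
  · intro x hx; simp only [mem_Icc] at hx; simp only [mem_range]; omega
  · intro x hx hx'
    simp only [mem_range] at hx; simp only [mem_Icc, not_and, not_le] at hx'
    exact Nat.choose_eq_zero_of_lt (by omega)

/-- One-dimensional convolution-of-binomials identity. -/
lemma vander1 (p q m : ℕ) :
    ∑ j ∈ range (m + 1), j.choose p * (m - j).choose q = (m + 1).choose (p + q + 1) := by
  induction m generalizing q with
  | zero =>
    rcases Nat.eq_zero_or_pos p with rfl | hp
    · rcases Nat.eq_zero_or_pos q with rfl | hq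
      · simp
      · simp [Nat.choose_eq_zero_of_lt hq, Nat.choose_eq_zero_of_lt (show 1 < 0+q+1 by omega),
          Nat.choose_eq_zero_of_lt (show (1:ℕ) < q+1 by omega)]
    · simp [Nat.choose_eq_zero_of_lt hp, Nat.choose_eq_zero_of_lt (show 1 < p+q+1 by omega)]
  | succ m ih =>
    cases q with
    | zero =>
      simp only [Nat.choose_zero_right, mul_one]
      rw [sum_choose_range]
    | succ q =>
      rw [Finset.sum_range_succ]
      have h1 : ∀ j ∈ range (m + 1),
          j.choose p * (m + 1 - j).choose (q + 1)
            = j.choose p * (m - j).choose (q + 1) + j.choose p * (m - j).choose q := by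
        intro j hj
        simp only [mem_range] at hj
        have : m + 1 - j = (m - j) + 1 := by omega
        rw [this, Nat.choose_succ_succ', Nat.mul_add]
        omega
      rw [Finset.sum_congr rfl h1, Finset.sum_add_distrib, ih (q + 1), ih q,
        Nat.sub_self, Nat.choose_eq_zero_of_lt (Nat.succ_pos q), Nat.mul_zero, Nat.add_zero]
      have : p + (q + 1) + 1 = (p + q + 1) + 1 := by omega
      rw [this, Nat.choose_succ_succ' (m + 1) (p + q + 1)]
      omega


/-- The finset of tuples with sum at most `s`. -/
noncomputable def PS (n s : ℕ) : Finset (Fin n → ℕ) :=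
  (Fintype.piFinset (fun _ : Fin n => Finset.range (s + 1))).filter
    (fun i => ∑ u, i u ≤ s)

lemma mem_PS {n s : ℕ} {i : Fin n → ℕ} : i ∈ PS n s ↔ ∑ u, i u ≤ s := by
  simp only [PS, mem_filter, Fintype.mem_piFinset, mem_range, and_iff_right_iff_imp]
  intro h u
  have : i u ≤ ∑ v, i v := Finset.single_le_sum (fun v _ => Nat.zero_le _) (mem_univ u)
  omega

lemma PS_split {M : Type*} [AddCommMonoid M] (n s : ℕ) (g : (Fin (n + 1) → ℕ) → M) :
    ∑ i ∈ PS (n + 1) s, g i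
      = ∑ j ∈ range (s + 1), ∑ t ∈ PS n (s - j), g (Fin.cons j t) := by
  rw [← Finset.sum_sigma (range (s + 1)) (fun j => PS n (s - j))
    (fun x => g (Fin.cons x.1 x.2))]
  apply Finset.sum_nbij' (i := fun i => (⟨i 0, Fin.tail i⟩ : Σ _ : ℕ, Fin n → ℕ))
    (j := fun x => Fin.cons x.1 x.2)
  · intro i hi
    rw [mem_PS, Fin.sum_univ_succ] at hi
    simp only [Finset.mem_sigma, mem_range, mem_PS]
    constructor
    · omega
    · have : ∑ u : Fin n, Fin.tail i u = ∑ u : Fin n, i u.succ := rfl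
      rw [this]; omega
  · intro x hx
    simp only [Finset.mem_sigma, mem_range, mem_PS] at hx
    rw [mem_PS, Fin.sum_univ_succ]
    simp only [Fin.cons_zero, Fin.cons_succ]
    omega
  · intro i _; exact Fin.cons_self_tail i
  · intro x _; simp [Fin.tail_cons]
  · intro i _; rw [Fin.cons_self_tail]

/-- Multidimensional hockey-stick: `∑_{i₁+⋯+iₙ ≤ s} ∏ C(iᵤ, kᵤ) = C(s+n, ∑k + n)`. -/
lemma multi_choose_sum (n : ℕ) (k : Fin n → ℕ) (s : ℕ) :
    ∑ i ∈ PS n s, ∏ u, (i u).choose (k u) = (s + n).choose ((∑ u, k u) + n) := by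
  induction n generalizing s with
  | zero =>
    have : PS 0 s = {![]} := by
      apply Finset.eq_singleton_iff_unique_mem.2
      constructor
      · rw [mem_PS]; simp
      · intro i _; exact funext (fun u => absurd u.2 (by omega))
    simp [this]
  | succ n ih =>
    rw [PS_split]
    have step : ∀ j ∈ range (s + 1),
        (∑ t ∈ PS n (s - j), ∏ u, ((Fin.cons j t : Fin (n+1) → ℕ) u).choose (k u))
          = j.choose (k 0) * ((s - j) + n).choose ((∑ u : Fin n, k u.succ) + n) := by
      intro j hj
      rw [← ih (fun u => k u.succ) (s - j), Finset.mul_sum]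
      apply Finset.sum_congr rfl
      intro t _
      rw [Fin.prod_univ_succ]
      simp [Fin.cons_zero, Fin.cons_succ]
    rw [Finset.sum_congr rfl step]
    -- extend the sum from range (s+1) to range (s+n+1); the extra terms vanish
    set q := (∑ u : Fin n, k u.succ) + n with hq
    have e1 : ∑ j ∈ range (s + 1), j.choose (k 0) * ((s - j) + n).choose q
        = ∑ j ∈ range (s + 1), j.choose (k 0) * ((s + n) - j).choose q := by
      refine Finset.sum_congr rfl (fun x hx => ?_)
      simp only [mem_range] at hx
      congr 2
      omega
    have ext : ∑ j ∈ range (s + 1), j.choose (k 0) * ((s + n) - j).choose q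
        = ∑ j ∈ range (s + n + 1), j.choose (k 0) * ((s + n) - j).choose q := by
      apply Finset.sum_subset
      · intro x hx; simp only [mem_range] at *; omega
      · intro x hx hx'
        simp only [mem_range] at hx hx'
        rw [Nat.choose_eq_zero_of_lt (show (s+n) - x < q by omega), Nat.mul_zero]
    rw [e1, ext, vander1]
    have hsum : ∑ u : Fin (n + 1), k u = k 0 + ∑ u : Fin n, k u.succ := Fin.sum_univ_succ k
    congr 1 <;> omega


lemma descPoch_degree (m : ℕ) : (descPochhammer ℚ m).degree = m := by
  rw [degree_eq_natDegree (monic_descPochhammer ℚ m).ne_zero, descPochhammer_natDegree]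

lemma binom_basis (d : ℕ) (f : Polynomial ℚ) (hf : f.degree ≤ d) :
    ∃ c : ℕ → ℚ, c d = f.coeff d * d.factorial ∧
      ∀ i : ℕ, f.eval (i : ℚ) = ∑ k ∈ range (d + 1), c k * (i.choose k : ℚ) := by
  induction d generalizing f with
  | zero =>
    refine ⟨fun _ => f.coeff 0, by simp, fun i => ?_⟩
    conv_lhs => rw [eq_C_of_degree_le_zero (show f.degree ≤ 0 by exact_mod_cast hf)]
    simp
  | succ d ih =>
    set r := f.coeff (d + 1) with hr
    set g := f - C r * descPochhammer ℚ (d + 1) with hg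
    have hgd : g.degree ≤ d := by
      rw [degree_le_iff_coeff_zero]
      intro m hm
      have hm' : d < m := by exact_mod_cast hm
      rcases eq_or_lt_of_le (Nat.succ_le_of_lt hm') with h | h
      · have hc1 : (descPochhammer ℚ (d + 1)).coeff (d + 1) = 1 := by
          have := (monic_descPochhammer ℚ (d + 1)).coeff_natDegree
          rwa [descPochhammer_natDegree] at this
        simp only [hg, coeff_sub, coeff_C_mul, ← h, hc1, mul_one, ← hr, sub_self]
      · have h1 : f.coeff m = 0 :=
          coeff_eq_zero_of_degree_lt (lt_of_le_of_lt hf (by exact_mod_cast h))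
        have h2 : (descPochhammer ℚ (d + 1)).coeff m = 0 :=
          coeff_eq_zero_of_degree_lt (by rw [descPoch_degree]; exact_mod_cast h)
        simp [hg, h1, h2]
    obtain ⟨c, hc, hev⟩ := ih g hgd
    refine ⟨Function.update c (d + 1) (r * (d + 1).factorial),
      by simp [Function.update_self], fun i => ?_⟩
    have hfeval : f.eval (i : ℚ) = g.eval (i : ℚ) + r * (i.descFactorial (d + 1) : ℚ) := by
      simp only [hg, eval_sub, eval_mul, eval_C, descPochhammer_eval_eq_descFactorial]
      ring
    have hR : ∑ k ∈ range (d + 1 + 1),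
          Function.update c (d + 1) (r * (d + 1).factorial) k * (i.choose k : ℚ)
        = (∑ k ∈ range (d + 1), c k * (i.choose k : ℚ))
            + r * (d + 1).factorial * (i.choose (d + 1) : ℚ) := by
      rw [Finset.sum_range_succ]
      congr 1
      · refine Finset.sum_congr rfl (fun k hk => ?_)
        rw [Function.update_of_ne (by simp only [mem_range] at hk; omega)]
      · rw [Function.update_self]
    rw [hfeval, hev i, hR, Nat.descFactorial_eq_factorial_mul_choose]
    push_cast
    ring



/-- The building-block polynomial `x ↦ C(x+n, m)`. -/
noncomputable def QB (n m : ℕ) : Polynomial ℚ :=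
  C ((m.factorial : ℚ)⁻¹) * (descPochhammer ℚ m).comp (X + C (n : ℚ))

lemma QB_comp_natDegree (n m : ℕ) :
    ((descPochhammer ℚ m).comp (X + C (n : ℚ))).natDegree = m := by
  rw [natDegree_comp, descPochhammer_natDegree, natDegree_X_add_C, mul_one]

lemma QB_comp_leadingCoeff (n m : ℕ) :
    ((descPochhammer ℚ m).comp (X + C (n : ℚ))).leadingCoeff = 1 := by
  rw [leadingCoeff_comp (by rw [natDegree_X_add_C]; exact one_ne_zero),
    (monic_descPochhammer ℚ m).leadingCoeff, (monic_X_add_C _).leadingCoeff, one_mul, one_pow]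

lemma QB_degree (n m : ℕ) : (QB n m).degree = m := by
  have hne : (descPochhammer ℚ m).comp (X + C (n : ℚ)) ≠ 0 := by
    rw [← leadingCoeff_ne_zero, QB_comp_leadingCoeff]; exact one_ne_zero
  rw [QB, degree_C_mul (by positivity), degree_eq_natDegree hne, QB_comp_natDegree]

lemma QB_leadingCoeff (n m : ℕ) : (QB n m).leadingCoeff = (m.factorial : ℚ)⁻¹ := by
  rw [QB, leadingCoeff_mul, leadingCoeff_C, QB_comp_leadingCoeff, mul_one]

lemma QB_coeff_self (n m : ℕ) : (QB n m).coeff m = (m.factorial : ℚ)⁻¹ := by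
  have := QB_leadingCoeff n m
  rwa [leadingCoeff, natDegree_eq_of_degree_eq_some (QB_degree n m)] at this

lemma QB_coeff_lt {n m D : ℕ} (h : m < D) : (QB n m).coeff D = 0 :=
  coeff_eq_zero_of_degree_lt (by rw [QB_degree]; exact_mod_cast h)

lemma QB_eval (n m s : ℕ) : (QB n m).eval (s : ℚ) = ((s + n).choose m : ℚ) := by
  have h1 : ((s : ℚ) + (n : ℚ)) = ((s + n : ℕ) : ℚ) := by push_cast; ring
  rw [QB, eval_mul, eval_C, eval_comp, eval_add, eval_X, eval_C, h1,
    descPochhammer_eval_eq_descFactorial, Nat.descFactorial_eq_factorial_mul_choose]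
  push_cast
  rw [← mul_assoc, inv_mul_cancel₀ (by positivity), one_mul]

lemma PS_def (n s : ℕ) : PS n s = (Fintype.piFinset (fun _ : Fin n => Finset.range (s + 1))).filter
    (fun i => ∑ u, i u ≤ s) := rfl

/-- The sum `∑_{i₁+⋯+i_n ≤ s} i₁^{a₁} ⋯ i_n^{a_n}` is a polynomial in `s` of degree
`a₁+⋯+a_n+n` with leading coefficient `(a₁!⋯a_n!)/((n+a₁+⋯+a_n)!)`. -/
theorem stmt4 (n : ℕ) (hn : 1 ≤ n) (a : Fin n → ℕ) :
    ∃ P : Polynomial ℚ,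
      P.degree = ((∑ u, a u) + n : ℕ) ∧
      P.leadingCoeff = (∏ u, ((a u).factorial : ℚ)) / (((n + ∑ u, a u).factorial : ℚ)) ∧
      ∀ s : ℕ,
        P.eval (s : ℚ) =
          ∑ i ∈ (Fintype.piFinset (fun _ : Fin n => Finset.range (s + 1))).filter
              (fun i => ∑ u, i u ≤ s),
            ∏ u, (i u : ℚ) ^ (a u) := by
  classical
  have hbasis : ∀ u : Fin n, ∃ c : ℕ → ℚ, c (a u) = ((a u).factorial : ℚ) ∧
      ∀ i : ℕ, (i : ℚ) ^ (a u) = ∑ k ∈ range (a u + 1), c k * (i.choose k : ℚ) := by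
    intro u
    obtain ⟨c, hc, hev⟩ := binom_basis (a u) (X ^ (a u)) (degree_X_pow_le _)
    refine ⟨c, ?_, fun i => by simpa using hev i⟩
    rwa [coeff_X_pow, if_pos rfl, one_mul] at hc
  choose c hc hcev using hbasis
  set D := (∑ u, a u) + n with hD
  set K : Finset (Fin n → ℕ) := Fintype.piFinset (fun u => range (a u + 1)) with hK
  set P : Polynomial ℚ := ∑ k ∈ K, C (∏ u, c u (k u)) * QB n ((∑ u, k u) + n) with hP
  have hmemK : ∀ {k : Fin n → ℕ}, k ∈ K → ∀ u, k u ≤ a u := by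
    intro k hk u
    have := Fintype.mem_piFinset.mp hk u
    simpa [Nat.lt_succ_iff] using this
  have hcoeffD : P.coeff D = (∏ u, ((a u).factorial : ℚ)) * ((D.factorial : ℚ))⁻¹ := by
    rw [hP, finset_sum_coeff]
    rw [Finset.sum_eq_single a]
    · rw [coeff_C_mul, ← hD, QB_coeff_self, Finset.prod_congr rfl (fun u _ => hc u)]
    · intro k hk hka
      have hlt : (∑ u, k u) + n < D := by
        have h1 : ∑ u, k u < ∑ u, a u := by
          refine Finset.sum_lt_sum (fun u _ => hmemK hk u) ?_
          by_contra h
          push_neg at h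
          exact hka (funext fun u => le_antisymm (hmemK hk u) (h u (mem_univ u)))
        omega
      rw [coeff_C_mul, QB_coeff_lt hlt, mul_zero]
    · intro ha
      exact absurd (Fintype.mem_piFinset.mpr fun u => mem_range.mpr (Nat.lt_succ_self _)) ha
  have hne : P.coeff D ≠ 0 := by
    rw [hcoeffD]
    have h1 : (0:ℚ) < ∏ u, ((a u).factorial : ℚ) :=
      Finset.prod_pos (fun u _ => by positivity)
    positivity
  have hdegle : P.degree ≤ (D : WithBot ℕ) := by
    rw [hP]
    refine (degree_sum_le _ _).trans (Finset.sup_le fun k hk => ?_)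
    refine (degree_mul_le _ _).trans ?_
    calc (C (∏ u, c u (k u))).degree + (QB n ((∑ u, k u) + n)).degree
        ≤ 0 + (((∑ u, k u) + n : ℕ) : WithBot ℕ) :=
          add_le_add degree_C_le (le_of_eq (QB_degree _ _))
      _ = (((∑ u, k u) + n : ℕ) : WithBot ℕ) := zero_add _
      _ ≤ (D : WithBot ℕ) := by
          have : (∑ u, k u) + n ≤ D := by
            have := Finset.sum_le_sum (fun u (_ : u ∈ univ) => hmemK hk u)
            omega
          exact_mod_cast this
  have hdeg : P.degree = (D : WithBot ℕ) := degree_eq_of_le_of_coeff_ne_zero hdegle hne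
  refine ⟨P, hdeg, ?_, ?_⟩
  · rw [leadingCoeff, natDegree_eq_of_degree_eq_some hdeg, hcoeffD,
      show n + ∑ u, a u = D by omega, ← div_eq_mul_inv]
  · intro s
    rw [hP, eval_finset_sum]
    simp only [eval_mul, eval_C, QB_eval]
    have key : ∀ k, k ∈ K → ((s + n).choose ((∑ u, k u) + n) : ℚ)
        = ∑ i ∈ PS n s, ∏ u, ((i u).choose (k u) : ℚ) := by
      intro k _
      rw [← multi_choose_sum n k s]
      push_cast
      rfl
    rw [Finset.sum_congr rfl (fun k hk => by rw [key k hk, Finset.mul_sum])]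
    rw [Finset.sum_comm]
    rw [← PS_def]
    refine Finset.sum_congr rfl (fun i _ => ?_)
    rw [Finset.prod_congr rfl (fun u _ => hcev u (i u)), Finset.prod_univ_sum]
    refine Finset.sum_congr rfl (fun k _ => ?_)
    rw [Finset.prod_mul_distrib]
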